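/- Let a, b ≥ 0 be real numbers with p := a² + b² > 0, and let t > 0. Then t⁻¹/((t⁻¹ + a)² + b²) > 1/((1 + a)² + b²) if and only if t lies strictly between 1 and p⁻¹, that is, if and only if (1 < t and t < p⁻¹) or (p⁻¹ < t and t < 1). -/

import Mathlib

/-- Sojourn-time criterion (Proposition 5.3): for `a, b ≥ 0` with `p = a² + b² > 0` and
`t > 0`, one has `f_{a,b}(t) > f_{a,b}(1)` iff `t` lies strictly between `1` and `p⁻¹`. -/
theorem sojourn_time (a b t : ℝ) (ha : 0 ≤ a) (hb : 0 ≤ b)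
    (hp : 0 < a ^ 2 + b ^ 2) (ht : 0 < t) :
    t⁻¹ / ((t⁻¹ + a) ^ 2 + b ^ 2) > 1 / ((1 + a) ^ 2 + b ^ 2) ↔
      (1 < t ∧ t < (a ^ 2 + b ^ 2)⁻¹) ∨ ((a ^ 2 + b ^ 2)⁻¹ < t ∧ t < 1) := by
  have hti : 0 < t⁻¹ := inv_pos.mpr ht
  have hpi : 0 < (a ^ 2 + b ^ 2)⁻¹ := inv_pos.mpr hp
  have hd1 : 0 < (t⁻¹ + a) ^ 2 + b ^ 2 := by positivity
  have hd2 : 0 < (1 + a) ^ 2 + b ^ 2 := by positivity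
  have hst : t * t⁻¹ = 1 := mul_inv_cancel₀ ht.ne'
  have hsp : (a ^ 2 + b ^ 2) * (a ^ 2 + b ^ 2)⁻¹ = 1 := mul_inv_cancel₀ hp.ne'
  rw [gt_iff_lt, div_lt_div_iff₀ hd2 hd1]
  constructor
  · intro h
    rcases lt_trichotomy t 1 with h1 | h1 | h1
    · right
      refine ⟨?_, h1⟩
      -- from h and t < 1 (hence t⁻¹ > 1) deduce t⁻¹ < p, i.e. p⁻¹ < t
      have hs1 : 1 < t⁻¹ := (one_lt_inv₀ ht).mpr h1
      have hsp' : t⁻¹ < a ^ 2 + b ^ 2 := by nlinarith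
      have := (inv_lt_inv₀ hp hti).mpr hsp'
      simpa using this
    · exfalso; rw [h1] at h; simp at h
    · left
      refine ⟨h1, ?_⟩
      have hs1 : t⁻¹ < 1 := by
        rw [inv_lt_one₀ ht]; exact h1
      have hsp' : a ^ 2 + b ^ 2 < t⁻¹ := by nlinarith
      have := (inv_lt_inv₀ hti hp).mpr hsp'
      simpa using this
  · rintro (⟨h1, h2⟩ | ⟨h1, h2⟩)
    · have hs1 : t⁻¹ < 1 := by rw [inv_lt_one₀ ht]; exact h1
      have hsp' : a ^ 2 + b ^ 2 < t⁻¹ := by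
        have := (inv_lt_inv₀ hpi ht).mpr h2
        simpa using this
      nlinarith
    · have hs1 : 1 < t⁻¹ := (one_lt_inv₀ ht).mpr h2
      have hsp' : t⁻¹ < a ^ 2 + b ^ 2 := by
        have := (inv_lt_inv₀ ht hpi).mpr h1
        simpa using this
      nlinarith
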